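/- Let G_0 be a graph on n_0 vertices such that every k_0-subset of vertices is identifying, and suppose |N[x]| ≤ k_0 − 1 for every vertex x of G_0 (equivalently, the maximum degree of G_0 is at most k_0 − 2). Let G be obtained from G_0 by adding one new vertex adjacent to all vertices of G_0. Then every (k_0+1)-subset of vertices of G is an identifying set in G. -/

import Mathlib

open Set

variable {V : Type*}

/-- The closed neighbourhood `N[x]` of a vertex. -/
def closedNbhd (G : SimpleGraph V) (x : V) : Set V :=
  insert x (G.neighborSet x)

/-- `C` is an identifying set: all sets `N[x] ∩ C` are nonempty and pairwise distinct. -/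
def IsIdentifying (G : SimpleGraph V) (C : Set V) : Prop :=
  (∀ x : V, (closedNbhd G x ∩ C).Nonempty) ∧
    ∀ x y : V, closedNbhd G x ∩ C = closedNbhd G y ∩ C → x = y

/-- Every `k`-subset of vertices is an identifying set. -/
def EveryKIdentifying (G : SimpleGraph V) (k : ℕ) : Prop :=
  ∀ C : Set V, C.ncard = k → IsIdentifying G C

/-- Add a new vertex (`none`) adjacent to all old vertices. -/
def addDominatingVertex (G : SimpleGraph V) : SimpleGraph (Option V) where
  Adj x y :=
    match x, y with
    | none, none => False
    | none, some _ => True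
    | some _, none => True
    | some a, some b => G.Adj a b
  symm := by
    constructor
    rintro (_ | a) (_ | b) h <;> simp_all
    exact h.symm
  loopless := by
    constructor
    rintro (_ | a) h <;> simp_all

lemma mem_cn_some {G : SimpleGraph V} {a v : V} :
    some v ∈ closedNbhd (addDominatingVertex G) (some a) ↔ v ∈ closedNbhd G a := by
  simp [closedNbhd, SimpleGraph.neighborSet, addDominatingVertex]

lemma none_mem_cn_some {G : SimpleGraph V} {a : V} :
    (none : Option V) ∈ closedNbhd (addDominatingVertex G) (some a) := by
  simp [closedNbhd, SimpleGraph.neighborSet, addDominatingVertex]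

lemma cn_none {G : SimpleGraph V} :
    closedNbhd (addDominatingVertex G) none = univ := by
  ext (_ | v) <;> simp [closedNbhd, SimpleGraph.neighborSet, addDominatingVertex]

theorem stmt7 [Fintype V] (G₀ : SimpleGraph V) (k₀ : ℕ)
    (h : EveryKIdentifying G₀ k₀)
    (hdeg : ∀ x : V, (closedNbhd G₀ x).ncard ≤ k₀ - 1) :
    EveryKIdentifying (addDominatingVertex G₀) (k₀ + 1) := by
  classical
  intro C hC
  have hCne : C.Nonempty := by
    rw [← Set.ncard_pos (Set.toFinite C)] at *
    omega
  by_cases hV : Nonempty V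
  swap
  · -- V empty
    refine ⟨?_, ?_⟩
    · rintro (_ | a)
      · rw [cn_none, Set.univ_inter]; exact hCne
      · exact absurd ⟨a⟩ hV
    · rintro (_ | a) (_ | b) _
      · rfl
      · exact absurd ⟨b⟩ hV
      · exact absurd ⟨a⟩ hV
      · exact absurd ⟨a⟩ hV
  have hk : 1 ≤ k₀ := by
    by_contra hk
    obtain ⟨x⟩ := hV
    have h0 := (h ∅ (by simp; omega)).1 x
    simp at h0
  set C' : Set V := some ⁻¹' C with hC'
  have hC'card : k₀ ≤ C'.ncard := by
    have hsub : C ⊆ insert none (some '' C') := by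
      rintro (_ | v) hv
      · exact Set.mem_insert _ _
      · exact Set.mem_insert_of_mem _ ⟨v, hv, rfl⟩
    have h1 : C.ncard ≤ (insert (none : Option V) (some '' C')).ncard :=
      Set.ncard_le_ncard hsub (Set.toFinite _)
    have h2 := Set.ncard_insert_le (none : Option V) (some '' C')
    have h3 : (some '' C').ncard = C'.ncard :=
      Set.ncard_image_of_injective _ (Option.some_injective V)
    omega
  obtain ⟨D, hDsub, hDcard⟩ := Set.exists_subset_card_eq hC'card
  have hD := h D hDcard
  constructor
  · rintro (_ | a)
    · rw [cn_none, Set.univ_inter]; exact hCne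
    · by_cases hn : (none : Option V) ∈ C
      · exact ⟨none, none_mem_cn_some, hn⟩
      · obtain ⟨v, hv1, hv2⟩ := hD.1 a
        exact ⟨some v, mem_cn_some.2 hv1, hDsub hv2⟩
  · have key : ∀ a : V, closedNbhd (addDominatingVertex G₀) (some a) ∩ C =
        closedNbhd (addDominatingVertex G₀) none ∩ C → False := by
      intro b hb
      rw [cn_none, Set.univ_inter] at hb
      have hsub2 : C' ⊆ closedNbhd G₀ b := by
        intro v hv
        have : some v ∈ closedNbhd (addDominatingVertex G₀) (some b) ∩ C := by
          rw [hb]; exact hv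
        exact mem_cn_some.1 this.1
      have := Set.ncard_le_ncard hsub2 (Set.toFinite _)
      have := hdeg b
      omega
    rintro (_ | a) (_ | b) hxy
    · rfl
    · exact absurd hxy.symm (key b)
    · exact absurd hxy (key a)
    · refine congrArg some (hD.2 a b ?_)
      ext v
      constructor
      · rintro ⟨hv1, hv2⟩
        have : some v ∈ closedNbhd (addDominatingVertex G₀) (some b) ∩ C := by
          rw [← hxy]; exact ⟨mem_cn_some.2 hv1, hDsub hv2⟩
        exact ⟨mem_cn_some.1 this.1, hv2⟩
      · rintro ⟨hv1, hv2⟩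
        have : some v ∈ closedNbhd (addDominatingVertex G₀) (some a) ∩ C := by
          rw [hxy]; exact ⟨mem_cn_some.2 hv1, hDsub hv2⟩
        exact ⟨mem_cn_some.1 this.1, hv2⟩
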